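/- Let E₀ = E₀(h) be any family of real numbers with |E₀(h) − (1+h)| ≤ e^{−1/(10h)}. Then there exist C > 0 and h₀ > 0 such that for every h ∈ (0,h₀) there is R̃ = R̃(h) ∈ [R, R+1] with |R̃(h) − R| ≤ C h and min_{j∈ℤ} |Φ(R̃(h)) + (j + 1/4)π h| ≥ π h/4. -/

import Mathlib

open MeasureTheory Set Real

noncomputable section

/-- The phase `Φ(x) = ∫_{4-E₀}^x √(E₀ - V(y)) dy`. -/
def wkbPhase (V : ℝ → ℝ) (E₀ : ℝ) (x : ℝ) : ℝ :=
  ∫ y in (4 - E₀)..x, Real.sqrt (E₀ - V y)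

/-- Given any family `E₀(h) = 1 + h + O(e^{-1/(10h)})`, one can choose
`R̃(h) ∈ [R, R+1]` with `R̃(h) = R + O(h)` avoiding the quantization condition:
`min_{j ∈ ℤ} |Φ(R̃(h)) + (j + 1/4)πh| ≥ πh/4`. -/
theorem choice_of_radius_avoiding_quantization
    (V : ℝ → ℝ)
    (hV_smooth : ContDiff ℝ (⊤ : ℕ∞) V) (hV_comp : HasCompactSupport V)
    (hV_nonneg : ∀ x, 0 ≤ V x) (hV_even : ∀ x, V (-x) = V x)
    (hV_inner : ∀ x ∈ Set.Icc (-1 : ℝ) 1, V x = x ^ 2 + 1)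
    (hV_slope : ∀ x ∈ Set.Icc (2 : ℝ) 3.5, V x = 4 - x)
    (hV_lt : ∀ x : ℝ, 3 < x → V x < 1)
    (hV_supp : tsupport V ⊆ Set.Icc (-5 : ℝ) 5)
    (R : ℝ) (hR : 5 < R)
    (E₀ : ℝ → ℝ)
    (hE₀ : ∀ h : ℝ, 0 < h → |E₀ h - (1 + h)| ≤ Real.exp (-1 / (10 * h))) :
    ∃ C > (0 : ℝ), ∃ h₀ > (0 : ℝ), ∀ h : ℝ, 0 < h → h < h₀ →
      ∃ R' ∈ Set.Icc R (R + 1),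
        |R' - R| ≤ C * h ∧
        ∀ j : ℤ, Real.pi * h / 4 ≤ |wkbPhase V (E₀ h) R' + ((j : ℝ) + 1 / 4) * Real.pi * h| := by
  refine ⟨Real.pi, Real.pi_pos, 1/400, by norm_num, fun h hh hlt => ?_⟩
  set E := E₀ h with hEdef
  have hπ : (0:ℝ) < Real.pi := Real.pi_pos
  have hπh : 0 < Real.pi * h := mul_pos hπ hh
  -- exp(-1/(10h)) ≤ 400 h²
  have hexp : Real.exp (-1 / (10 * h)) ≤ 400 * h ^ 2 := by
    have h1 : (1 / (20 * h) : ℝ) ≤ Real.exp (1 / (20 * h)) := by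
      linarith [Real.add_one_le_exp (1 / (20 * h)), (by positivity : (0:ℝ) < 1 / (20 * h))]
    have h2 : (1 / (20 * h)) ^ 2 ≤ Real.exp (1 / (10 * h)) := by
      have he : Real.exp (1 / (10 * h)) = (Real.exp (1 / (20 * h))) ^ 2 := by
        rw [← Real.exp_nat_mul]
        congr 1
        push_cast
        field_simp
        ring
      rw [he]
      exact pow_le_pow_left₀ (by positivity) h1 2
    have hpos2 : (0:ℝ) < (1 / (20 * h)) ^ 2 := by positivity
    have key : Real.exp (-1 / (10 * h)) ≤ 1 / ((1 / (20 * h)) ^ 2) := by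
      rw [neg_div, Real.exp_neg, inv_eq_one_div]
      exact one_div_le_one_div_of_le hpos2 h2
    calc Real.exp (-1 / (10 * h)) ≤ 1 / ((1 / (20 * h)) ^ 2) := key
      _ = 400 * h ^ 2 := by field_simp; ring
  have hE1 : (1:ℝ) ≤ E := by
    have habs := abs_le.mp (hE₀ h hh)
    have h400 : 400 * h ^ 2 ≤ h := by nlinarith
    nlinarith [habs.1]
  set s := Real.sqrt E with hsdef
  have hs1 : (1:ℝ) ≤ s := by
    rw [hsdef, show (1:ℝ) = Real.sqrt 1 by simp]
    exact Real.sqrt_le_sqrt hE1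
  have hs0 : (0:ℝ) < s := lt_of_lt_of_le one_pos hs1
  set Φ := wkbPhase V E R with hΦdef
  set k : ℤ := ⌈Φ / (Real.pi * h) - 1/4⌉ with hkdef
  set num : ℝ := ((k:ℝ) + 1/4) * (Real.pi * h) - Φ with hnumdef
  have hnum0 : 0 ≤ num := by
    have hk := Int.le_ceil (Φ / (Real.pi * h) - 1/4)
    have h1 : Φ / (Real.pi * h) ≤ (k:ℝ) + 1/4 := by
      rw [hkdef] at *; linarith
    have h2 : Φ ≤ ((k:ℝ) + 1/4) * (Real.pi * h) := (div_le_iff₀ hπh).mp h1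
    rw [hnumdef]; linarith
  have hnum1 : num < Real.pi * h := by
    have hk := Int.ceil_lt_add_one (Φ / (Real.pi * h) - 1/4)
    have h1 : (k:ℝ) + 1/4 < Φ / (Real.pi * h) + 1 := by
      rw [hkdef] at *; linarith
    have h2 : ((k:ℝ) + 1/4) * (Real.pi * h) < (Φ / (Real.pi * h) + 1) * (Real.pi * h) :=
      mul_lt_mul_of_pos_right h1 hπh
    have h3 : (Φ / (Real.pi * h) + 1) * (Real.pi * h) = Φ + Real.pi * h := by
      field_simp
    rw [hnumdef]; linarith [h3 ▸ h2]
  set t : ℝ := num / s with htdef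
  have ht0 : 0 ≤ t := div_nonneg hnum0 hs0.le
  have htnum : t ≤ num := div_le_self hnum0 hs1
  have htπh : t < Real.pi * h := lt_of_le_of_lt htnum hnum1
  have hπh1 : Real.pi * h < 1 := by
    nlinarith [Real.pi_lt_d2]
  refine ⟨R + t, ⟨by linarith, by linarith⟩, ?_, ?_⟩
  · rw [show R + t - R = t by ring, abs_of_nonneg ht0]
    linarith
  · -- compute wkbPhase V E (R + t) = ((k:ℝ)+1/4) * (π h)
    have hcont : Continuous (fun y => Real.sqrt (E - V y)) :=
      Real.continuous_sqrt.comp (continuous_const.sub hV_smooth.continuous)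
    have hint : ∀ a b : ℝ, IntervalIntegrable (fun y => Real.sqrt (E - V y)) volume a b :=
      fun a b => hcont.intervalIntegrable a b
    have hsplit : wkbPhase V E (R + t) = Φ + ∫ y in R..(R + t), Real.sqrt (E - V y) := by
      rw [hΦdef, wkbPhase, wkbPhase]
      rw [← intervalIntegral.integral_add_adjacent_intervals (hint (4 - E) R) (hint R (R + t))]
    have hVzero : ∀ y ∈ Set.uIcc R (R + t), Real.sqrt (E - V y) = Real.sqrt E := by
      intro y hy
      rw [Set.uIcc_of_le (by linarith : R ≤ R + t)] at hy
      have hy5 : 5 < y := lt_of_lt_of_le hR hy.1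
      have : V y = 0 := by
        by_contra hne
        have : y ∈ tsupport V := subset_tsupport V hne
        have := hV_supp this
        exact absurd this.2 (by linarith)
      rw [this, sub_zero]
    have hintval : (∫ y in R..(R + t), Real.sqrt (E - V y)) = s * t := by
      rw [intervalIntegral.integral_congr hVzero]
      rw [intervalIntegral.integral_const]
      rw [hsdef]
      simp [smul_eq_mul]
      ring
    have hst : s * t = num := by
      rw [htdef, mul_div_cancel₀ _ (ne_of_gt hs0)]
    have hΦR' : wkbPhase V E (R + t) = ((k:ℝ) + 1/4) * (Real.pi * h) := by
      rw [hsplit, hintval, hst, hnumdef]; ring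
    intro j
    rw [hΦR']
    have heq : ((k:ℝ) + 1/4) * (Real.pi * h) + ((j:ℝ) + 1/4) * Real.pi * h
        = (((k + j : ℤ) : ℝ) + 1/2) * (Real.pi * h) := by
      push_cast; ring
    rw [heq, abs_mul, abs_of_pos hπh]
    have hhalf : (1:ℝ)/2 ≤ |((k + j : ℤ) : ℝ) + 1/2| := by
      set m : ℤ := k + j
      rcases le_or_gt 0 m with hm | hm
      · have : (0:ℝ) ≤ (m:ℝ) := Int.cast_nonneg_iff.mpr hm
        rw [abs_of_nonneg (by linarith)]; linarith
      · have hm1 : m ≤ -1 := by omega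
        have : (m:ℝ) ≤ -1 := by exact_mod_cast hm1
        rw [abs_of_nonpos (by linarith)]; linarith
    nlinarith
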